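/- Let T > 0, p₀ > 0, and let γ denote the standard Gaussian measure on ℝ (mean 0, variance 1). Let C̄ : ℝ → ℝ be continuous on (0,∞), nonnegative on (0,∞), nondecreasing on (0,∞), concave on (0,∞), satisfy a linear growth bound C̄(q) ≤ A + B·q for all q > 0 for some constants A, B ≥ 0, and suppose there exist 0 < q̲ < q̄ such that C̄ is strictly concave on (q̲, q̄). Define G(σ) := ∫ C̄(p₀·exp(−σ²T/2 + σ√T·z)) dγ(z). Then G is strictly decreasing on [0,∞): for all 0 ≤ σ₁ < σ₂, G(σ₂) < G(σ₁). -/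

import Mathlib

open MeasureTheory ProbabilityTheory Real Set
open scoped NNReal ENNReal

noncomputable section

namespace EPVaux

local notation "γ" => gaussianReal 0 1



lemma pdf_mul_exp (c x : ℝ) :
    gaussianPDFReal 0 1 x * rexp (c * x) = rexp (c ^ 2 / 2) * gaussianPDFReal c 1 x := by
  simp only [gaussianPDFReal, NNReal.coe_one, mul_one, sub_zero]
  rw [mul_assoc, ← Real.exp_add, mul_left_comm, ← Real.exp_add]
  congr 2
  ring

lemma gaussian_eq_withDensity :
    (gaussianReal 0 1 : Measure ℝ) = volume.withDensity (gaussianPDF 0 1) :=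
  gaussianReal_of_var_ne_zero 0 one_ne_zero

lemma gaussianPDF_eq_coe (μ : ℝ) (v : ℝ≥0) (x : ℝ) :
    gaussianPDF μ v x = ((gaussianPDFReal μ v x).toNNReal : ℝ≥0∞) := rfl

lemma integrable_gaussian_iff {g : ℝ → ℝ} :
    Integrable g γ ↔ Integrable (fun x => gaussianPDFReal 0 1 x * g x) volume := by
  rw [gaussian_eq_withDensity]
  have hm : Measurable fun x => (gaussianPDFReal 0 1 x).toNNReal :=
    (measurable_gaussianPDFReal 0 1).real_toNNReal
  rw [show (gaussianPDF 0 1) = fun x => ((fun x => (gaussianPDFReal 0 1 x).toNNReal) x : ℝ≥0∞)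
      from rfl]
  rw [integrable_withDensity_iff_integrable_smul hm]
  constructor <;> intro h <;> refine h.congr (Filter.Eventually.of_forall fun x => ?_)
  · simp [NNReal.smul_def, Real.coe_toNNReal _ (gaussianPDFReal_nonneg 0 1 x)]
  · simp [NNReal.smul_def, Real.coe_toNNReal _ (gaussianPDFReal_nonneg 0 1 x)]

lemma integral_gaussian_eq (g : ℝ → ℝ) :
    ∫ x, g x ∂γ = ∫ x, gaussianPDFReal 0 1 x * g x := by
  rw [gaussian_eq_withDensity]
  have hm : Measurable fun x => (gaussianPDFReal 0 1 x).toNNReal :=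
    (measurable_gaussianPDFReal 0 1).real_toNNReal
  rw [show (gaussianPDF 0 1) = fun x => ((fun x => (gaussianPDFReal 0 1 x).toNNReal) x : ℝ≥0∞)
      from rfl]
  rw [integral_withDensity_eq_integral_smul hm]
  congr 1
  funext x
  simp [NNReal.smul_def, Real.coe_toNNReal _ (gaussianPDFReal_nonneg 0 1 x)]

lemma integrable_exp_gaussian (c : ℝ) : Integrable (fun x => rexp (c * x)) γ := by
  rw [integrable_gaussian_iff]
  have : (fun x => gaussianPDFReal 0 1 x * rexp (c * x))
      = fun x => rexp (c ^ 2 / 2) * gaussianPDFReal c 1 x := funext fun x => pdf_mul_exp c x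
  rw [this]
  exact (integrable_gaussianPDFReal c 1).const_mul _

lemma integral_exp_gaussian (c : ℝ) : ∫ x, rexp (c * x) ∂γ = rexp (c ^ 2 / 2) := by
  rw [integral_gaussian_eq]
  simp_rw [pdf_mul_exp]
  rw [integral_const_mul, integral_gaussianPDFReal_eq_one c one_ne_zero, mul_one]

lemma gaussian_pos_of_isOpen {s : Set ℝ} (hs : IsOpen s) (hne : s.Nonempty) :
    0 < (gaussianReal 0 1 : Measure ℝ) s := by
  rcases (eq_zero_or_pos ((gaussianReal 0 1 : Measure ℝ) s)) with h | h
  · exfalso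
    have h2 : (volume : Measure ℝ) s = 0 :=
      gaussianReal_absolutelyContinuous' 0 one_ne_zero h
    exact absurd h2 (hs.measure_pos volume hne).ne'
  · exact h



/-- the reflection `(x,y) ↦ (ax+by, bx−ay)` as a measurable equiv (it is an involution). -/
def Tmap (a b : ℝ) (hab : a ^ 2 + b ^ 2 = 1) : ℝ × ℝ ≃ᵐ ℝ × ℝ where
  toFun p := (a * p.1 + b * p.2, b * p.1 - a * p.2)
  invFun p := (a * p.1 + b * p.2, b * p.1 - a * p.2)
  left_inv p := by
    obtain ⟨x, y⟩ := p
    simp only [Prod.mk.injEq]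
    constructor
    · linear_combination x * hab
    · linear_combination y * hab
  right_inv p := by
    obtain ⟨x, y⟩ := p
    simp only [Prod.mk.injEq]
    constructor
    · linear_combination x * hab
    · linear_combination y * hab
  measurable_toFun := by
    exact ((measurable_fst.const_mul a).add (measurable_snd.const_mul b)).prod
      ((measurable_fst.const_mul b).sub (measurable_snd.const_mul a))
  measurable_invFun := by
    exact ((measurable_fst.const_mul a).add (measurable_snd.const_mul b)).prod
      ((measurable_fst.const_mul b).sub (measurable_snd.const_mul a))

/-- the same map as a linear map -/
def Tlin (a b : ℝ) : ℝ × ℝ →ₗ[ℝ] ℝ × ℝ where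
  toFun p := (a * p.1 + b * p.2, b * p.1 - a * p.2)
  map_add' p q := by
    simp only [Prod.fst_add, Prod.snd_add, Prod.mk_add_mk, Prod.mk.injEq]
    constructor <;> ring
  map_smul' c p := by
    simp only [Prod.smul_fst, Prod.smul_snd, smul_eq_mul, RingHom.id_apply, Prod.smul_mk,
      Prod.mk.injEq]
    constructor <;> ring

lemma Tlin_det (a b : ℝ) : LinearMap.det (Tlin a b) = -(a ^ 2 + b ^ 2) := by
  rw [← LinearMap.det_toMatrix (Module.Basis.finTwoProd ℝ), Matrix.det_fin_two]
  simp [LinearMap.toMatrix_apply, Tlin, Module.Basis.finTwoProd_zero, Module.Basis.finTwoProd_one,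
    Module.Basis.coe_finTwoProd_repr]
  ring

lemma map_Tmap_volume (a b : ℝ) (hab : a ^ 2 + b ^ 2 = 1) :
    (volume.prod volume : Measure (ℝ × ℝ)).map (Tmap a b hab) = volume.prod volume := by
  have h1 : ⇑(Tmap a b hab) = ⇑(Tlin a b) := rfl
  rw [h1, Measure.map_linearMap_addHaar_eq_smul_addHaar _ (by rw [Tlin_det, hab]; norm_num)]
  rw [Tlin_det, hab]
  norm_num

lemma map_withDensity_equiv {α : Type*} [MeasurableSpace α] (e : α ≃ᵐ α) (ν : Measure α)
    {ρ : α → ℝ≥0∞} (hρ : Measurable ρ) :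
    (ν.withDensity ρ).map e = (ν.map e).withDensity (ρ ∘ e.symm) := by
  ext s hs
  rw [Measure.map_apply e.measurable hs, withDensity_apply _ (e.measurable hs),
    withDensity_apply _ hs, setLIntegral_map hs (hρ.comp e.symm.measurable) e.measurable]
  refine lintegral_congr fun x => ?_
  simp

lemma prod_gaussian :
    (gaussianReal 0 1).prod (gaussianReal 0 1)
      = (volume.prod volume : Measure (ℝ × ℝ)).withDensity
          (fun p => gaussianPDF 0 1 p.1 * gaussianPDF 0 1 p.2) := by
  have key : ∀ s t : Set ℝ, MeasurableSet s → MeasurableSet t →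
      ((volume.prod volume : Measure (ℝ × ℝ)).withDensity
        (fun p => gaussianPDF 0 1 p.1 * gaussianPDF 0 1 p.2)) (s ×ˢ t)
        = gaussianReal 0 1 s * gaussianReal 0 1 t := by
    intro s t hs ht
    rw [withDensity_apply _ (hs.prod ht), ← Measure.prod_restrict,
      lintegral_prod_mul (measurable_gaussianPDF 0 1).aemeasurable
        (measurable_gaussianPDF 0 1).aemeasurable,
      gaussianReal_apply 0 one_ne_zero s, gaussianReal_apply 0 one_ne_zero t]
  exact Measure.prod_eq key

lemma rho_invariant (a b : ℝ) (hab : a ^ 2 + b ^ 2 = 1) (x y : ℝ) :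
    gaussianPDF 0 1 (a * x + b * y) * gaussianPDF 0 1 (b * x - a * y)
      = gaussianPDF 0 1 x * gaussianPDF 0 1 y := by
  unfold gaussianPDF
  rw [← ENNReal.ofReal_mul (gaussianPDFReal_nonneg _ _ _),
    ← ENNReal.ofReal_mul (gaussianPDFReal_nonneg _ _ _)]
  congr 1
  simp only [gaussianPDFReal, NNReal.coe_one, mul_one, sub_zero]
  rw [mul_mul_mul_comm, ← Real.exp_add, mul_mul_mul_comm, ← Real.exp_add]
  congr 2
  linear_combination (-(x ^ 2 + y ^ 2) / 2) * hab

lemma rot (a b : ℝ) (hab : a ^ 2 + b ^ 2 = 1) :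
    ((gaussianReal 0 1).prod (gaussianReal 0 1)).map (fun p : ℝ × ℝ => a * p.1 + b * p.2)
      = gaussianReal 0 1 := by
  have hmeasρ : Measurable fun p : ℝ × ℝ => gaussianPDF 0 1 p.1 * gaussianPDF 0 1 p.2 :=
    ((measurable_gaussianPDF 0 1).comp measurable_fst).mul
      ((measurable_gaussianPDF 0 1).comp measurable_snd)
  have hinv : ((gaussianReal 0 1).prod (gaussianReal 0 1)).map (Tmap a b hab)
      = (gaussianReal 0 1).prod (gaussianReal 0 1) := by
    rw [prod_gaussian, map_withDensity_equiv _ _ hmeasρ, map_Tmap_volume a b hab]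
    congr 1
    funext p
    have hsymm : (Tmap a b hab).symm p = (a * p.1 + b * p.2, b * p.1 - a * p.2) := rfl
    simp only [Function.comp_apply, hsymm]
    exact rho_invariant a b hab p.1 p.2
  have hcomp : (fun p : ℝ × ℝ => a * p.1 + b * p.2) = Prod.fst ∘ (Tmap a b hab) := rfl
  rw [hcomp, ← Measure.map_map measurable_fst (Tmap a b hab).measurable, hinv,
    Measure.map_fst_prod]
  simp



lemma support_line {C : ℝ → ℝ} (hconc : ConcaveOn ℝ (Ioi 0) C) {m : ℝ} (hm : 0 < m) :
    ∃ s : ℝ, ∀ q ∈ Ioi (0 : ℝ), C q ≤ C m + s * (q - m) := by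
  set S : Set ℝ := (fun y => (C y - C m) / (y - m)) '' Ioi m with hS
  have hmmem : m ∈ Ioi (0 : ℝ) := hm
  have hne : S.Nonempty := ⟨_, ⟨m + 1, by simp only [mem_Ioi]; linarith, rfl⟩⟩
  have hbdd : BddAbove S := by
    refine ⟨(C m - C (m / 2)) / (m - m / 2), ?_⟩
    rintro _ ⟨y, hy, rfl⟩
    exact hconc.slope_anti_adjacent (by simp [mem_Ioi]; positivity)
      (mem_Ioi.2 (hm.trans hy)) (by linarith) hy
  refine ⟨sSup S, fun q hq => ?_⟩
  rcases lt_trichotomy q m with h | h | h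
  · have h1 : sSup S ≤ (C m - C q) / (m - q) := by
      refine csSup_le hne ?_
      rintro _ ⟨y, hy, rfl⟩
      exact hconc.slope_anti_adjacent hq (mem_Ioi.2 (hm.trans hy)) h hy
    have h2 : sSup S * (m - q) ≤ C m - C q := (le_div_iff₀ (by linarith)).mp h1
    nlinarith
  · subst h; simp
  · have h1 : (C q - C m) / (q - m) ≤ sSup S := le_csSup hbdd ⟨q, h, rfl⟩
    have h2 : C q - C m ≤ sSup S * (q - m) := (div_le_iff₀ (by linarith)).mp h1
    linarith


lemma integrable_comp {C : ℝ → ℝ} (hcont : ContinuousOn C (Set.Ioi (0 : ℝ)))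
    (hnn : ∀ q : ℝ, 0 < q → 0 ≤ C q) {A B : ℝ}
    (hgrowth : ∀ q : ℝ, 0 < q → C q ≤ A + B * q)
    {K : ℝ} (α β : ℝ) (hK : 0 < K) :
    Integrable (fun z => C (K * rexp (α + β * z))) γ := by
  have hgc : Continuous fun z : ℝ => K * rexp (α + β * z) := by continuity
  have hmeas : Continuous fun z => C (K * rexp (α + β * z)) :=
    hcont.comp_continuous hgc (fun x => mem_Ioi.2 (by positivity))
  refine Integrable.mono' (g := fun z => |A| + |B| * K * rexp α * rexp (β * z)) ?_
    hmeas.aestronglyMeasurable (Filter.Eventually.of_forall fun z => ?_)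
  · exact (integrable_const _).add ((integrable_exp_gaussian β).const_mul _)
  · rw [Real.norm_eq_abs, abs_of_nonneg (hnn _ (by positivity))]
    calc C (K * rexp (α + β * z)) ≤ A + B * (K * rexp (α + β * z)) :=
          hgrowth _ (by positivity)
      _ ≤ |A| + |B| * (K * rexp (α + β * z)) := by
          have h1 : A ≤ |A| := le_abs_self A
          have h2 : B ≤ |B| := le_abs_self B
          have h3 : (0:ℝ) < K * rexp (α + β * z) := by positivity
          nlinarith
      _ = |A| + |B| * K * rexp α * rexp (β * z) := by rw [Real.exp_add]; ring

lemma strict_jensen {C : ℝ → ℝ} (hcont : ContinuousOn C (Set.Ioi (0 : ℝ)))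
    (hnn : ∀ q : ℝ, 0 < q → 0 ≤ C q)
    (hconc : ConcaveOn ℝ (Set.Ioi (0 : ℝ)) C)
    {A B : ℝ} (hgrowth : ∀ q : ℝ, 0 < q → C q ≤ A + B * q)
    {qlo qhi : ℝ} (hqlo : 0 < qlo) (hqs : qlo < qhi)
    (hstrict : StrictConcaveOn ℝ (Set.Ioo qlo qhi) C)
    {m c : ℝ} (hm : 0 < m) (hc : 0 < c) :
    ∫ w, C (m * rexp (-c ^ 2 / 2 + c * w)) ∂γ < C m := by
  obtain ⟨s, hs⟩ := support_line hconc hm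
  -- a point where the supporting line is strictly above C
  have hqstar : ∃ q ∈ Ioo qlo qhi, C q < C m + s * (q - m) := by
    by_contra hcon
    push_neg at hcon
    have heq : ∀ q ∈ Ioo qlo qhi, C q = C m + s * (q - m) := fun q hq =>
      le_antisymm (hs q (mem_Ioi.2 (hqlo.trans hq.1))) (hcon q hq)
    set x := qlo + (qhi - qlo) / 4 with hx
    set y := qhi - (qhi - qlo) / 4 with hy
    have hxm : x ∈ Ioo qlo qhi := ⟨by simp only [hx]; linarith, by simp only [hx]; linarith⟩
    have hym : y ∈ Ioo qlo qhi := ⟨by simp only [hy]; linarith, by simp only [hy]; linarith⟩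
    have hxy : x ≠ y := by simp only [hx, hy]; intro h; nlinarith [hqs]
    have hmid : (1/2 : ℝ) • x + (1/2 : ℝ) • y ∈ Ioo qlo qhi := by
      simp only [smul_eq_mul, hx, hy]
      constructor <;> [linarith; linarith]
    have hkey := hstrict.2 hxm hym hxy (by norm_num : (0:ℝ) < 1/2)
      (by norm_num : (0:ℝ) < 1/2) (by norm_num)
    rw [smul_eq_mul, smul_eq_mul, heq x hxm, heq y hym, heq _ hmid] at hkey
    simp only [smul_eq_mul] at hkey
    nlinarith [hkey]
  obtain ⟨qstar, hqmem, hqlt⟩ := hqstar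
  have hqpos : 0 < qstar := hqlo.trans hqmem.1
  set f : ℝ → ℝ := fun w => C (m * rexp (-c ^ 2 / 2 + c * w)) with hf
  set L : ℝ → ℝ := fun w => C m + s * (m * rexp (-c ^ 2 / 2 + c * w) - m) with hL
  have hfL : ∀ w, f w ≤ L w := fun w => hs _ (mem_Ioi.2 (by positivity))
  have hfi : Integrable f γ := integrable_comp hcont hnn hgrowth (-c ^ 2 / 2) c hm
  have hLform : L = fun w => (C m - s * m) + (s * m * rexp (-c ^ 2 / 2)) * rexp (c * w) := by
    funext w
    simp only [hL]
    rw [Real.exp_add]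
    ring
  have hLi : Integrable L γ := by
    rw [hLform]
    exact (integrable_const _).add ((integrable_exp_gaussian c).const_mul _)
  have hIL : ∫ w, L w ∂γ = C m := by
    rw [hLform, integral_add (integrable_const _) ((integrable_exp_gaussian c).const_mul _),
      integral_const, integral_const_mul, integral_exp_gaussian c]
    rw [probReal_univ]
    rw [mul_assoc, ← Real.exp_add]
    simp only [ENNReal.toReal_one, one_smul]
    rw [show -c ^ 2 / 2 + c ^ 2 / 2 = 0 by ring, Real.exp_zero]
    ring
  have hgc : Continuous fun w : ℝ => m * rexp (-c ^ 2 / 2 + c * w) := by continuity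
  have hcontf : Continuous f :=
    hcont.comp_continuous hgc (fun x => mem_Ioi.2 (by positivity))
  have hcontL : Continuous L := by
    rw [hLform]; continuity
  set h : ℝ → ℝ := fun w => L w - f w with hh
  have hh0 : ∀ w, 0 ≤ h w := fun w => sub_nonneg.2 (hfL w)
  set w₀ : ℝ := (Real.log (qstar / m) + c ^ 2 / 2) / c with hw₀
  have harg : m * rexp (-c ^ 2 / 2 + c * w₀) = qstar := by
    rw [show -c ^ 2 / 2 + c * w₀ = Real.log (qstar / m) by
      simp only [hw₀]; field_simp; ring]
    rw [Real.exp_log (by positivity)]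
    field_simp
  have hw0 : 0 < h w₀ := by
    simp only [hh, hL, hf, harg]
    linarith
  have hpos : 0 < ∫ w, h w ∂γ := by
    rw [integral_pos_iff_support_of_nonneg hh0 (hLi.sub hfi)]
    refine gaussian_pos_of_isOpen ?_ ⟨w₀, hw0.ne'⟩
    have : Function.support h = h ⁻¹' ({0}ᶜ) := by
      ext w; simp [Function.mem_support]
    rw [this]
    exact (isOpen_compl_singleton).preimage (hcontL.sub hcontf)
  have hsub : ∫ w, h w ∂γ = (∫ w, L w ∂γ) - ∫ w, f w ∂γ := integral_sub hLi hfi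
  rw [hsub, hIL] at hpos
  linarith

end EPVaux

set_option maxHeartbeats 1600000 in
/-- If additionally `C̄` is strictly concave on some interval `(q̲, q̄)` with
`0 < q̲ < q̄`, then the risk-neutral expected discounted pool value
`G(σ) = ∫ C̄(p₀·exp(−σ²T/2 + σ√T·z)) dγ(z)` is strictly decreasing on `[0,∞)`:
for all `0 ≤ σ₁ < σ₂`, `G(σ₂) < G(σ₁)`. -/
theorem expected_pool_value_strictAnti (T p₀ : ℝ) (hT : 0 < T) (hp₀ : 0 < p₀)
    (C : ℝ → ℝ) (hcont : ContinuousOn C (Set.Ioi (0 : ℝ)))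
    (hnn : ∀ q : ℝ, 0 < q → 0 ≤ C q)
    (hmono : MonotoneOn C (Set.Ioi (0 : ℝ)))
    (hconc : ConcaveOn ℝ (Set.Ioi (0 : ℝ)) C)
    (A B : ℝ) (hA : 0 ≤ A) (hB : 0 ≤ B)
    (hgrowth : ∀ q : ℝ, 0 < q → C q ≤ A + B * q)
    (qlo qhi : ℝ) (hqlo : 0 < qlo) (hqs : qlo < qhi)
    (hstrict : StrictConcaveOn ℝ (Set.Ioo qlo qhi) C) :
    let G : ℝ → ℝ := fun σ =>
      ∫ z, C (p₀ * Real.exp (-σ ^ 2 * T / 2 + σ * Real.sqrt T * z))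
        ∂(gaussianReal 0 1)
    ∀ σ₁ σ₂ : ℝ, 0 ≤ σ₁ → σ₁ < σ₂ → G σ₂ < G σ₁ := by
  intro G σ₁ σ₂ hσ₁ hlt
  simp only [G]
  have hσ₂ : 0 < σ₂ := lt_of_le_of_lt hσ₁ hlt
  set t := Real.sqrt T with htdef
  have ht : 0 < t := Real.sqrt_pos.2 hT
  have ht2 : t ^ 2 = T := Real.sq_sqrt hT.le
  set b := Real.sqrt (σ₂ ^ 2 - σ₁ ^ 2) with hbdef
  have hbpos : 0 < b := Real.sqrt_pos.2 (by nlinarith)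
  have hb2 : σ₁ ^ 2 + b ^ 2 = σ₂ ^ 2 := by
    rw [hbdef, Real.sq_sqrt (by nlinarith : (0:ℝ) ≤ σ₂ ^ 2 - σ₁ ^ 2)]
    ring
  have hrot := EPVaux.rot (σ₁ / σ₂) (b / σ₂) (by
    field_simp
    linear_combination hb2)
  set g : ℝ → ℝ := fun q => C (p₀ * rexp (-σ₂ ^ 2 * T / 2 + t * q)) with hg
  have hgc' : Continuous fun q : ℝ => p₀ * rexp (-σ₂ ^ 2 * T / 2 + t * q) := by continuity
  have hgcont : Continuous g :=
    hcont.comp_continuous hgc' (fun x => Set.mem_Ioi.2 (by positivity))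
  set ψ : ℝ → ℝ := fun z => C (p₀ * rexp (-σ₁ ^ 2 * T / 2 + σ₁ * t * z)) with hψ
  -- integrability on the product space
  have hFi : Integrable (fun p : ℝ × ℝ => g (σ₁ * p.1 + b * p.2))
      ((gaussianReal 0 1).prod (gaussianReal 0 1)) := by
    have hmeas : Continuous fun p : ℝ × ℝ => g (σ₁ * p.1 + b * p.2) :=
      hgcont.comp (by continuity)
    refine Integrable.mono'
      (g := fun p => |A| + (|B| * p₀ * rexp (-σ₂ ^ 2 * T / 2))
        * (rexp (t * σ₁ * p.1) * rexp (t * b * p.2))) ?_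
      hmeas.aestronglyMeasurable (Filter.Eventually.of_forall fun p => ?_)
    · exact (integrable_const _).add
        (((EPVaux.integrable_exp_gaussian (t * σ₁)).mul_prod
          (EPVaux.integrable_exp_gaussian (t * b))).const_mul _)
    · rw [Real.norm_eq_abs, abs_of_nonneg (hnn _ (by positivity))]
      have hexp : rexp (-σ₂ ^ 2 * T / 2 + t * (σ₁ * p.1 + b * p.2))
          = rexp (-σ₂ ^ 2 * T / 2) * rexp (t * σ₁ * p.1) * rexp (t * b * p.2) := by
        rw [← Real.exp_add, ← Real.exp_add]
        congr 1
        ring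
      calc g (σ₁ * p.1 + b * p.2)
          ≤ A + B * (p₀ * rexp (-σ₂ ^ 2 * T / 2 + t * (σ₁ * p.1 + b * p.2))) :=
            hgrowth _ (by positivity)
        _ ≤ |A| + |B| * (p₀ * rexp (-σ₂ ^ 2 * T / 2 + t * (σ₁ * p.1 + b * p.2))) := by
            have h3 : (0:ℝ) < p₀ * rexp (-σ₂ ^ 2 * T / 2 + t * (σ₁ * p.1 + b * p.2)) := by
              positivity
            nlinarith [le_abs_self A, le_abs_self B]
        _ = |A| + (|B| * p₀ * rexp (-σ₂ ^ 2 * T / 2))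
              * (rexp (t * σ₁ * p.1) * rexp (t * b * p.2)) := by
            rw [hexp]; ring
  -- step 1: rewrite G σ₂ as an integral of g
  have e1 : (∫ z, C (p₀ * rexp (-σ₂ ^ 2 * T / 2 + σ₂ * t * z)) ∂(gaussianReal 0 1))
      = ∫ z, g (σ₂ * z) ∂(gaussianReal 0 1) := by
    congr 1
    funext z
    simp only [hg]
    rw [show σ₂ * t * z = t * (σ₂ * z) by ring]
  -- step 2: rotation
  have e2 : (∫ z, g (σ₂ * z) ∂(gaussianReal 0 1))
      = ∫ p : ℝ × ℝ, g (σ₁ * p.1 + b * p.2)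
          ∂((gaussianReal 0 1).prod (gaussianReal 0 1)) := by
    have hφm : Measurable fun p : ℝ × ℝ => (σ₁ / σ₂) * p.1 + (b / σ₂) * p.2 :=
      (measurable_fst.const_mul _).add (measurable_snd.const_mul _)
    have hgm : Continuous fun z : ℝ => g (σ₂ * z) := hgcont.comp (by continuity)
    have e2' : (∫ z, g (σ₂ * z)
          ∂(((gaussianReal 0 1).prod (gaussianReal 0 1)).map
            (fun p : ℝ × ℝ => (σ₁ / σ₂) * p.1 + (b / σ₂) * p.2)))
        = ∫ p : ℝ × ℝ, g (σ₂ * ((σ₁ / σ₂) * p.1 + (b / σ₂) * p.2))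
            ∂((gaussianReal 0 1).prod (gaussianReal 0 1)) :=
      integral_map hφm.aemeasurable hgm.aestronglyMeasurable
    rw [hrot] at e2'
    rw [e2']
    congr 1
    funext p
    have harg : σ₂ * ((σ₁ / σ₂) * p.1 + (b / σ₂) * p.2) = σ₁ * p.1 + b * p.2 := by
      field_simp
    rw [harg]
  -- step 3: Fubini
  have e3 : (∫ p : ℝ × ℝ, g (σ₁ * p.1 + b * p.2)
        ∂((gaussianReal 0 1).prod (gaussianReal 0 1)))
      = ∫ z, (∫ w, g (σ₁ * z + b * w) ∂(gaussianReal 0 1)) ∂(gaussianReal 0 1) :=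
    integral_prod _ hFi
  -- step 4: pointwise strict Jensen
  have key : ∀ z, (∫ w, g (σ₁ * z + b * w) ∂(gaussianReal 0 1)) < ψ z := by
    intro z
    have hform : ∀ w, g (σ₁ * z + b * w)
        = C ((p₀ * rexp (-σ₁ ^ 2 * T / 2 + σ₁ * t * z))
            * rexp (-(t * b) ^ 2 / 2 + (t * b) * w)) := by
      intro w
      simp only [hg]
      rw [mul_assoc, ← Real.exp_add]
      congr 2
      rw [Real.exp_eq_exp]
      linear_combination (b ^ 2 / 2) * ht2 + (T / 2) * hb2
    simp_rw [hform]
    exact EPVaux.strict_jensen hcont hnn hconc hgrowth hqlo hqs hstrict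
      (by positivity) (by positivity)
  have hψi : Integrable ψ (gaussianReal 0 1) := by
    have := EPVaux.integrable_comp hcont hnn hgrowth (K := p₀) (-σ₁ ^ 2 * T / 2) (σ₁ * t) hp₀
    exact this
  have hφi : Integrable (fun z => ∫ w, g (σ₁ * z + b * w) ∂(gaussianReal 0 1))
      (gaussianReal 0 1) := hFi.integral_prod_left
  have hlt2 : (∫ z, (∫ w, g (σ₁ * z + b * w) ∂(gaussianReal 0 1)) ∂(gaussianReal 0 1))
      < ∫ z, ψ z ∂(gaussianReal 0 1) := by
    have hnn2 : (0 : ℝ → ℝ)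
        ≤ fun z => ψ z - ∫ w, g (σ₁ * z + b * w) ∂(gaussianReal 0 1) :=
      fun z => sub_nonneg.2 (key z).le
    have hpos : 0 < ∫ z, (ψ z - ∫ w, g (σ₁ * z + b * w) ∂(gaussianReal 0 1))
        ∂(gaussianReal 0 1) := by
      rw [integral_pos_iff_support_of_nonneg hnn2 (hψi.sub hφi)]
      have hsup : Function.support
          (fun z => ψ z - ∫ w, g (σ₁ * z + b * w) ∂(gaussianReal 0 1)) = Set.univ :=
        Set.eq_univ_of_forall fun z => sub_ne_zero.2 (key z).ne'
      rw [hsup]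
      simp
    rw [integral_sub hψi hφi] at hpos
    linarith
  calc (∫ z, C (p₀ * rexp (-σ₂ ^ 2 * T / 2 + σ₂ * t * z)) ∂(gaussianReal 0 1))
      = ∫ z, (∫ w, g (σ₁ * z + b * w) ∂(gaussianReal 0 1)) ∂(gaussianReal 0 1) := by
        rw [e1, e2, e3]
    _ < ∫ z, ψ z ∂(gaussianReal 0 1) := hlt2
    _ = ∫ z, C (p₀ * rexp (-σ₁ ^ 2 * T / 2 + σ₁ * t * z)) ∂(gaussianReal 0 1) := rfl

end
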